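/- Let M be a non-negative integer, n ≥ 1 an integer, and let x_1,…,x_n be nonzero complex numbers with fixed square roots y_i (y_i^2 = x_i) such that the 2n numbers x_1, x_1^{-1}, …, x_n, x_n^{-1} are pairwise distinct (this guarantees that all denominator determinants below are nonzero). Then (∏_{i=1}^{n}(y_i + y_i^{−1})) · ( s_{(M^n)}(x_1, x_1^{-1}, …, x_n, x_n^{-1}) + s_{(M^{n-1})}(x_1, x_1^{-1}, …, x_n, x_n^{-1}) ) = so_{(((M+1)/2)^n)}(x_1,…,x_n) · o^{even}_{((M/2)^n)}(x_1,…,x_n), where both Schur functions are in the 2n variables x_1, x_1^{-1}, …, x_n, x_n^{-1} (the shape (M^{n-1}) is padded with a final part equal to 0), the shapes (((M+1)/2)^n) and ((M/2)^n) consist of n copies of (M+1)/2 and of M/2 respectively (half-integers when the corresponding numerator is odd), and the characters with half-integer shapes are computed using the y_i. -/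

import Mathlib

open Matrix Finset

/-- The `2n` variables `x₁, x₁⁻¹, x₂, x₂⁻¹, …, xₙ, xₙ⁻¹`. -/
noncomputable def pairVars {n : ℕ} (x : Fin n → ℂ) : Fin (2 * n) → ℂ :=
  fun i =>
    if (i : ℕ) % 2 = 0 then x ⟨(i : ℕ) / 2, by have := i.isLt; omega⟩
    else (x ⟨(i : ℕ) / 2, by have := i.isLt; omega⟩)⁻¹
/-- The Schur function `s_λ(x₁,…,x_N)` as a ratio of determinants,
for an integer shape `lam` (indexed by `Fin N`, i.e. 0-based). -/
noncomputable def schurChar {N : ℕ} (lam : Fin N → ℤ) (x : Fin N → ℂ) : ℂ :=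
  Matrix.det (Matrix.of fun h t : Fin N =>
      x h ^ (lam t + (N : ℤ) - 1 - ((t : ℕ) : ℤ))) /
    Matrix.det (Matrix.of fun h t : Fin N => x h ^ ((N : ℤ) - 1 - ((t : ℕ) : ℤ)))
/-- The odd orthogonal character `so_λ(x₁,…,x_N)` with *doubled* shape
`lam2 = 2·λ` (so that half-integer shapes are allowed), computed from fixed
square roots `y` of the variables (`y i ^ 2 = x i`). -/
noncomputable def soChar2 {N : ℕ} (lam2 : Fin N → ℤ) (y : Fin N → ℂ) : ℂ :=
  Matrix.det (Matrix.of fun h t : Fin N =>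
      y h ^ (lam2 t + 2 * ((N : ℤ) - 1 - ((t : ℕ) : ℤ)) + 1) -
        y h ^ (-(lam2 t + 2 * ((N : ℤ) - 1 - ((t : ℕ) : ℤ)) + 1))) /
    Matrix.det (Matrix.of fun h t : Fin N =>
      y h ^ (2 * ((N : ℤ) - 1 - ((t : ℕ) : ℤ)) + 1) -
        y h ^ (-(2 * ((N : ℤ) - 1 - ((t : ℕ) : ℤ)) + 1)))
/-- The even orthogonal character `o^even_λ(x₁,…,x_N)` with *doubled* shape
`lam2 = 2·λ` (so that half-integer shapes are allowed), computed from fixed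
square roots `y` of the variables (`y i ^ 2 = x i`). -/
noncomputable def oevenChar2 {N : ℕ} (lam2 : Fin N → ℤ) (y : Fin N → ℂ) : ℂ :=
  2 * Matrix.det (Matrix.of fun h t : Fin N =>
      y h ^ (lam2 t + 2 * ((N : ℤ) - 1 - ((t : ℕ) : ℤ))) +
        y h ^ (-(lam2 t + 2 * ((N : ℤ) - 1 - ((t : ℕ) : ℤ))))) /
    Matrix.det (Matrix.of fun h t : Fin N =>
      y h ^ (2 * ((N : ℤ) - 1 - ((t : ℕ) : ℤ))) +
        y h ^ (-(2 * ((N : ℤ) - 1 - ((t : ℕ) : ℤ)))))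

namespace SchurAux
open Sum Equiv
noncomputable section



/-- general submatrix determinant with two different equivs -/
lemma det_submatrix_two {α β : Type*} [DecidableEq α] [Fintype α] [DecidableEq β] [Fintype β]
    (e f : α ≃ β) (A : Matrix β β ℂ) :
    (A.submatrix e f).det = ((Equiv.Perm.sign (f.trans e.symm) : ℤ) : ℂ) * A.det := by
  have h : A.submatrix e f = (A.submatrix e e).submatrix id (f.trans e.symm) := by
    ext i j
    simp [Matrix.submatrix_apply]
  rw [h, Matrix.det_permute', Matrix.det_submatrix_equiv_self]

/-- block factorization -/
lemma det_blocks_pm {n : ℕ} (A B : Matrix (Fin n) (Fin n) ℂ) :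
    (Matrix.fromBlocks A B A (-B)).det = (-2) ^ n * A.det * B.det := by
  have h : (Matrix.fromBlocks (1 : Matrix (Fin n) (Fin n) ℂ) 0 (-1) 1) *
      (Matrix.fromBlocks A B A (-B)) = Matrix.fromBlocks A B 0 ((-2 : ℂ) • B) := by
    rw [Matrix.fromBlocks_multiply]
    simp only [Matrix.one_mul, Matrix.zero_mul, Matrix.neg_mul, add_zero, neg_add_cancel]
    congr 1
    ext i j
    rcases i with i | i <;> rcases j with j | j <;>
      simp [Matrix.fromBlocks, Matrix.smul_apply] <;> ring
  have hdet := congrArg Matrix.det h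
  simp only [Matrix.det_mul, Matrix.det_fromBlocks_zero₁₂, Matrix.det_fromBlocks_zero₂₁,
    Matrix.det_one, Matrix.det_smul, one_mul, mul_one, Fintype.card_fin] at hdet
  rw [hdet]
  ring

/-- pigeonhole determinant vanishing -/
lemma det_eq_zero_pigeon {n : ℕ} (c0 : Fin n) (A : Matrix (Fin n ⊕ Fin n) (Fin n ⊕ Fin n) ℂ)
    (h1 : ∀ i j, A (Sum.inr i) (Sum.inl j) = 0) (h2 : ∀ i, A (Sum.inr i) (Sum.inr c0) = 0) :
    A.det = 0 := by
  rw [Matrix.det_apply]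
  refine Finset.sum_eq_zero fun σ _ => ?_
  set C : Finset (Fin n ⊕ Fin n) := insert (Sum.inr c0) (Finset.univ.image Sum.inl) with hC
  have key : ∃ j ∈ C, A (σ j) j = 0 := by
    by_contra hc
    push_neg at hc
    have himg : C.image σ ⊆ Finset.univ.image Sum.inl := by
      intro s hs
      rcases Finset.mem_image.1 hs with ⟨j, hj, rfl⟩
      rcases hσ : σ j with i | i
      · exact Finset.mem_image.2 ⟨i, Finset.mem_univ _, rfl⟩
      · exfalso
        rcases Finset.mem_insert.1 hj with rfl | hj'
        · exact hc _ hj (by rw [hσ]; exact h2 i)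
        · rcases Finset.mem_image.1 hj' with ⟨j', _, rfl⟩
          exact hc _ hj (by rw [hσ]; exact h1 i j')
    have hcard := Finset.card_le_card himg
    rw [Finset.card_image_of_injective _ σ.injective] at hcard
    have h1c : C.card = n + 1 := by
      rw [hC, Finset.card_insert_of_notMem (by simp), Finset.card_image_of_injective _
        Sum.inl_injective, Finset.card_univ, Fintype.card_fin]
    have h2c : (Finset.univ.image (Sum.inl : Fin n → Fin n ⊕ Fin n)).card = n := by
      rw [Finset.card_image_of_injective _ Sum.inl_injective, Finset.card_univ, Fintype.card_fin]
    omega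
  obtain ⟨j, hjC, hj0⟩ := key
  have hz : (∏ i : Fin n ⊕ Fin n, A (σ i) i) = 0 :=
    Finset.prod_eq_zero (f := fun i => A (σ i) i) (Finset.mem_univ j) hj0
  rw [hz, smul_zero]



/-- rows: `inl i ↦ 2i` (the variable `xᵢ`), `inr i ↦ 2i+1` (the variable `xᵢ⁻¹`). -/
def rho (n : ℕ) : (Fin n ⊕ Fin n) ≃ Fin (2 * n) where
  toFun := Sum.elim (fun i => ⟨2 * (i : ℕ), by have := i.isLt; omega⟩)
    (fun i => ⟨2 * (i : ℕ) + 1, by have := i.isLt; omega⟩)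
  invFun p := if h : (p : ℕ) % 2 = 0 then Sum.inl ⟨(p : ℕ) / 2, by have := p.isLt; omega⟩
    else Sum.inr ⟨(p : ℕ) / 2, by have := p.isLt; omega⟩
  left_inv := by
    rintro (i | i) <;> dsimp only [Sum.elim_inl, Sum.elim_inr]
    · rw [dif_pos (by omega)]
      congr 1
      exact Fin.ext (by simp only [Fin.val_mk]; omega)
    · rw [dif_neg (by omega)]
      congr 1
      exact Fin.ext (by simp only [Fin.val_mk]; omega)
  right_inv p := by
    dsimp only
    by_cases h : (p : ℕ) % 2 = 0
    · rw [dif_pos h]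
      dsimp only [Sum.elim_inl]
      exact Fin.ext (by simp only [Fin.val_mk]; omega)
    · rw [dif_neg h]
      dsimp only [Sum.elim_inr]
      exact Fin.ext (by simp only [Fin.val_mk]; omega)

/-- columns: `inl t ↦ t`, `inr t ↦ 2n-1-t`. -/
def kap (n : ℕ) : (Fin n ⊕ Fin n) ≃ Fin (2 * n) where
  toFun := Sum.elim (fun t => ⟨(t : ℕ), by have := t.isLt; omega⟩)
    (fun t => ⟨2 * n - 1 - (t : ℕ), by have := t.isLt; omega⟩)
  invFun p := if h : (p : ℕ) < n then Sum.inl ⟨(p : ℕ), h⟩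
    else Sum.inr ⟨2 * n - 1 - (p : ℕ), by have := p.isLt; omega⟩
  left_inv := by
    rintro (t | t) <;> dsimp only [Sum.elim_inl, Sum.elim_inr]
    · rw [dif_pos (by exact t.isLt)]
    · rw [dif_neg (by have := t.isLt; omega)]
      congr 1
      exact Fin.ext (by simp only [Fin.val_mk]; have := t.isLt; omega)
  right_inv p := by
    dsimp only
    by_cases h : (p : ℕ) < n
    · rw [dif_pos h]
      dsimp only [Sum.elim_inl]
    · rw [dif_neg h]
      dsimp only [Sum.elim_inr]
      exact Fin.ext (by simp only [Fin.val_mk]; have := p.isLt; omega)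

@[simp] lemma rho_inl (n : ℕ) (i : Fin n) : ((rho n) (Sum.inl i) : ℕ) = 2 * i := rfl
@[simp] lemma rho_inr (n : ℕ) (i : Fin n) : ((rho n) (Sum.inr i) : ℕ) = 2 * i + 1 := rfl
@[simp] lemma kap_inl (n : ℕ) (t : Fin n) : ((kap n) (Sum.inl t) : ℕ) = t := rfl
@[simp] lemma kap_inr (n : ℕ) (t : Fin n) : ((kap n) (Sum.inr t) : ℕ) = 2 * n - 1 - t := rfl



variable (M n : ℕ) (x y : Fin n → ℂ)

def eA (t : Fin n) : ℤ := ((M : ℤ) + 1) + 2 * ((n : ℤ) - 1 - ((t : ℕ) : ℤ)) + 1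
def eB (t : Fin n) : ℤ := 2 * ((n : ℤ) - 1 - ((t : ℕ) : ℤ)) + 1
def eC (t : Fin n) : ℤ := (M : ℤ) + 2 * ((n : ℤ) - 1 - ((t : ℕ) : ℤ))
def eD (t : Fin n) : ℤ := 2 * ((n : ℤ) - 1 - ((t : ℕ) : ℤ))

def matSN : Matrix (Fin n) (Fin n) ℂ :=
  Matrix.of fun h t => y h ^ eA M n t - y h ^ (-(eA M n t))
def matSD : Matrix (Fin n) (Fin n) ℂ :=
  Matrix.of fun h t => y h ^ eB n t - y h ^ (-(eB n t))
def matON : Matrix (Fin n) (Fin n) ℂ :=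
  Matrix.of fun h t => y h ^ eC M n t + y h ^ (-(eC M n t))
def matOD : Matrix (Fin n) (Fin n) ℂ :=
  Matrix.of fun h t => y h ^ eD n t + y h ^ (-(eD n t))
def matPB : Matrix (Fin n) (Fin n) ℂ :=
  Matrix.of fun h t => y h ^ eB n t + y h ^ (-(eB n t))

def matYD : Matrix (Fin n ⊕ Fin n) (Fin n ⊕ Fin n) ℂ :=
  Matrix.fromBlocks (Matrix.of fun i t => y i ^ eB n t) (Matrix.of fun i t => y i ^ (-(eB n t)))
    (Matrix.of fun i t => y i ^ (-(eB n t))) (Matrix.of fun i t => y i ^ eB n t)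

def matT : Matrix (Fin n ⊕ Fin n) (Fin n ⊕ Fin n) ℂ := Matrix.fromBlocks 1 1 1 (-1)

lemma detT : (matT n).det = (-2) ^ n := by
  have h := det_blocks_pm (1 : Matrix (Fin n) (Fin n) ℂ) 1
  simpa [matT] using h

lemma matYD_mul_T : matYD n y * matT n =
    Matrix.fromBlocks (matPB n y) (matSD n y) (matPB n y) (-(matSD n y)) := by
  rw [matYD, matT, Matrix.fromBlocks_multiply]
  simp only [Matrix.mul_one, Matrix.mul_neg]
  ext r c
  rcases r with i | i <;> rcases c with t | t <;>
    simp [matPB, matSD, Matrix.fromBlocks, Matrix.add_apply, Matrix.neg_apply] <;> ring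

lemma det_matYD : (matYD n y).det = (matPB n y).det * (matSD n y).det := by
  have h1 := congrArg Matrix.det (matYD_mul_T n y)
  rw [Matrix.det_mul, detT, det_blocks_pm] at h1
  have h2 : ((-2 : ℂ)) ^ n ≠ 0 := pow_ne_zero _ (by norm_num)
  apply mul_left_cancel₀ h2
  rw [mul_comm ((matYD n y).det) ((-2 : ℂ) ^ n)] at h1
  rw [h1]
  ring
variable (M n : ℕ) (y : Fin n → ℂ)

def matP1 : Matrix (Fin n) (Fin n) ℂ :=
  Matrix.of fun i t => if (t : ℕ) = n - 1 then y i ^ eC M n t + y i ^ (-(eC M n t))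
    else y i ^ eC M n t
def matQ1 : Matrix (Fin n) (Fin n) ℂ := Matrix.of fun i t => y i ^ (-(eA M n t))
def matP2 : Matrix (Fin n) (Fin n) ℂ :=
  Matrix.of fun i t => if (t : ℕ) = n - 1 then y i ^ (-(eC M n t)) + y i ^ eC M n t
    else y i ^ (-(eC M n t))
def matQ2 : Matrix (Fin n) (Fin n) ℂ := Matrix.of fun i t => y i ^ eA M n t
def matY : Matrix (Fin n ⊕ Fin n) (Fin n ⊕ Fin n) ℂ :=
  Matrix.fromBlocks (matP1 M n y) (matQ1 M n y) (matP2 M n y) (matQ2 M n y)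

def matBR : Matrix (Fin n) (Fin n) ℂ := Matrix.of fun u t => if (u : ℕ) + 1 = (t : ℕ) then 1 else 0
def matCR : Matrix (Fin n) (Fin n) ℂ := Matrix.of fun u t => if (u : ℕ) = (t : ℕ) + 1 then 1 else 0
def matDR : Matrix (Fin n) (Fin n) ℂ :=
  Matrix.of fun u t => if u = t then (if (t : ℕ) = 0 then 1 else -1) else 0
def matR : Matrix (Fin n ⊕ Fin n) (Fin n ⊕ Fin n) ℂ :=
  Matrix.fromBlocks 1 (matBR n) (matCR n) (matDR n)

def matZQ1 : Matrix (Fin n) (Fin n) ℂ :=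
  Matrix.of fun i t => if (t : ℕ) = 0 then y i ^ (-(eA M n t))
    else y i ^ eA M n t - y i ^ (-(eA M n t))
def matZQ2 : Matrix (Fin n) (Fin n) ℂ :=
  Matrix.of fun i t => if (t : ℕ) = 0 then y i ^ eA M n t
    else -(y i ^ eA M n t - y i ^ (-(eA M n t)))
def matZ : Matrix (Fin n ⊕ Fin n) (Fin n ⊕ Fin n) ℂ :=
  Matrix.fromBlocks (matON M n y) (matZQ1 M n y) (matON M n y) (matZQ2 M n y)

lemma mul_matCR (A : Matrix (Fin n) (Fin n) ℂ) (i t : Fin n) :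
    (A * matCR n) i t = if h : (t : ℕ) + 1 < n then A i ⟨(t : ℕ) + 1, h⟩ else 0 := by
  rw [Matrix.mul_apply]
  by_cases h : (t : ℕ) + 1 < n
  · rw [dif_pos h, Finset.sum_eq_single (⟨(t : ℕ) + 1, h⟩ : Fin n)]
    · simp [matCR]
    · intro u _ hu
      have : ¬((u : ℕ) = (t : ℕ) + 1) := fun hv => hu (Fin.ext (by simpa using hv))
      simp [matCR, this]
    · simp
  · rw [dif_neg h]
    apply Finset.sum_eq_zero
    intro u _
    have : ¬((u : ℕ) = (t : ℕ) + 1) := by have := u.isLt; omega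
    simp [matCR, this]

lemma mul_matBR (A : Matrix (Fin n) (Fin n) ℂ) (i t : Fin n) :
    (A * matBR n) i t = if h : 0 < (t : ℕ) then A i ⟨(t : ℕ) - 1, by have := t.isLt; omega⟩
      else 0 := by
  rw [Matrix.mul_apply]
  by_cases h : 0 < (t : ℕ)
  · rw [dif_pos h, Finset.sum_eq_single (⟨(t : ℕ) - 1, by have := t.isLt; omega⟩ : Fin n)]
    · have : ((⟨(t : ℕ) - 1, by have := t.isLt; omega⟩ : Fin n) : ℕ) + 1 = (t : ℕ) := by
        simp only [Fin.val_mk]; omega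
      simp [matBR, this]
    · intro u _ hu
      have : ¬((u : ℕ) + 1 = (t : ℕ)) := fun hv => hu (Fin.ext (by simp only [Fin.val_mk]; omega))
      simp [matBR, this]
    · simp
  · rw [dif_neg h]
    apply Finset.sum_eq_zero
    intro u _
    have : ¬((u : ℕ) + 1 = (t : ℕ)) := by omega
    simp [matBR, this]

lemma mul_matDR (A : Matrix (Fin n) (Fin n) ℂ) (i t : Fin n) :
    (A * matDR n) i t = A i t * (if (t : ℕ) = 0 then 1 else -1) := by
  rw [Matrix.mul_apply]
  rw [Finset.sum_eq_single t]
  · simp [matDR]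
  · intro u _ hu
    simp [matDR, hu]
  · simp

lemma matY_mul_R : matY M n y * matR n = matZ M n y := by
  rw [matY, matR, matZ, Matrix.fromBlocks_multiply]
  have h11 : matP1 M n y * 1 + matQ1 M n y * matCR n = matON M n y := by
    ext i t
    rw [Matrix.add_apply, Matrix.mul_one, mul_matCR]
    by_cases h : (t : ℕ) + 1 < n
    · rw [dif_pos h]
      have ht : ¬((t : ℕ) = n - 1) := by omega
      have he : eA M n ⟨(t : ℕ) + 1, h⟩ = eC M n t := by
        simp only [eA, eC, Fin.val_mk]; omega
      simp only [matP1, matQ1, matON, Matrix.of_apply, if_neg ht, he]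
    · rw [dif_neg h]
      have ht : (t : ℕ) = n - 1 := by have := t.isLt; omega
      simp only [matP1, matON, Matrix.of_apply, if_pos ht, add_zero]
  have h21 : matP2 M n y * 1 + matQ2 M n y * matCR n = matON M n y := by
    ext i t
    rw [Matrix.add_apply, Matrix.mul_one, mul_matCR]
    by_cases h : (t : ℕ) + 1 < n
    · rw [dif_pos h]
      have ht : ¬((t : ℕ) = n - 1) := by omega
      have he : eA M n ⟨(t : ℕ) + 1, h⟩ = eC M n t := by
        simp only [eA, eC, Fin.val_mk]; omega
      simp only [matP2, matQ2, matON, Matrix.of_apply, if_neg ht, he]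
      ring
    · rw [dif_neg h]
      have ht : (t : ℕ) = n - 1 := by have := t.isLt; omega
      simp only [matP2, matON, Matrix.of_apply, if_pos ht, add_zero]
      ring
  have h12 : matP1 M n y * matBR n + matQ1 M n y * matDR n = matZQ1 M n y := by
    ext i t
    rw [Matrix.add_apply, mul_matBR, mul_matDR]
    by_cases h : 0 < (t : ℕ)
    · rw [dif_pos h]
      have ht1 : ¬(((⟨(t : ℕ) - 1, by have := t.isLt; omega⟩ : Fin n) : ℕ) = n - 1) := by
        simp only [Fin.val_mk]; have := t.isLt; omega
      have he : eC M n ⟨(t : ℕ) - 1, by have := t.isLt; omega⟩ = eA M n t := by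
        simp only [eC, eA, Fin.val_mk]; omega
      have ht : ¬((t : ℕ) = 0) := by omega
      simp only [matP1, matQ1, matZQ1, Matrix.of_apply, if_neg ht1, if_neg ht, he]
      ring
    · rw [dif_neg h]
      have ht : (t : ℕ) = 0 := by omega
      simp only [matQ1, matZQ1, Matrix.of_apply, if_pos ht, zero_add, mul_one]
  have h22 : matP2 M n y * matBR n + matQ2 M n y * matDR n = matZQ2 M n y := by
    ext i t
    rw [Matrix.add_apply, mul_matBR, mul_matDR]
    by_cases h : 0 < (t : ℕ)
    · rw [dif_pos h]
      have ht1 : ¬(((⟨(t : ℕ) - 1, by have := t.isLt; omega⟩ : Fin n) : ℕ) = n - 1) := by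
        simp only [Fin.val_mk]; have := t.isLt; omega
      have he : eC M n ⟨(t : ℕ) - 1, by have := t.isLt; omega⟩ = eA M n t := by
        simp only [eC, eA, Fin.val_mk]; omega
      have ht : ¬((t : ℕ) = 0) := by omega
      simp only [matP2, matQ2, matZQ2, Matrix.of_apply, if_neg ht1, if_neg ht, he]
      ring
    · rw [dif_neg h]
      have ht : (t : ℕ) = 0 := by omega
      simp only [matQ2, matZQ2, Matrix.of_apply, if_pos ht, zero_add, mul_one]
  rw [h11, h21, h12, h22]

lemma detR (hn : 0 < n) : (matR n).det = (-2 : ℂ) ^ (n - 1) := by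
  rw [matR, Matrix.det_fromBlocks_one₁₁]
  have h : matDR n - matCR n * matBR n =
      Matrix.diagonal (fun t : Fin n => if (t : ℕ) = 0 then 1 else (-2 : ℂ)) := by
    ext u t
    rw [Matrix.sub_apply, mul_matBR]
    by_cases h : 0 < (t : ℕ)
    · rw [dif_pos h]
      by_cases hut : u = t
      · subst hut
        have h0 : ¬((u : ℕ) = 0) := by omega
        rw [Matrix.diagonal_apply_eq]
        simp only [matDR, matCR, Matrix.of_apply, if_pos rfl, if_neg h0, Fin.val_mk]
        have hcond : (u : ℕ) = (u : ℕ) - 1 + 1 := by omega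
        rw [if_pos hcond]
        norm_num
      · have h2 : ¬((u : ℕ) = ((t : ℕ) - 1) + 1) := by
          intro hv; exact hut (Fin.ext (by omega))
        have h2' : ¬((u : ℕ) = (⟨(t : ℕ) - 1, by have := t.isLt; omega⟩ : Fin n) + 1) := by
          simpa using h2
        simp [matDR, matCR, Matrix.diagonal_apply, hut, h2']
    · rw [dif_neg h]
      have ht : (t : ℕ) = 0 := by omega
      by_cases hut : u = t
      · subst hut
        simp [matDR, Matrix.diagonal_apply, ht]
      · simp [matDR, Matrix.diagonal_apply, hut]
  rw [h, Matrix.det_diagonal]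
  obtain ⟨m, rfl⟩ : ∃ m, n = m + 1 := ⟨n - 1, by omega⟩
  rw [Fin.prod_univ_succ]
  have h0 : ((0 : Fin (m + 1)) : ℕ) = 0 := rfl
  rw [if_pos h0, one_mul]
  have hsucc : ∀ i : Fin m, (if ((i.succ : Fin (m + 1)) : ℕ) = 0 then 1 else (-2 : ℂ)) = -2 := by
    intro i
    rw [if_neg (by simp)]
  rw [Finset.prod_congr rfl (fun i _ => hsucc i), Finset.prod_const]
  simp
lemma rowdiff (A : Matrix (Fin n ⊕ Fin n) (Fin n ⊕ Fin n) ℂ) :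
    Matrix.fromBlocks 1 0 (-1) 1 * A = Matrix.fromBlocks A.toBlocks₁₁ A.toBlocks₁₂
      (A.toBlocks₂₁ - A.toBlocks₁₁) (A.toBlocks₂₂ - A.toBlocks₁₂) := by
  conv_lhs => rw [← Matrix.fromBlocks_toBlocks A]
  rw [Matrix.fromBlocks_multiply]
  simp only [Matrix.one_mul, Matrix.zero_mul, Matrix.neg_mul, add_zero, zero_add,
    neg_add_eq_sub]

lemma det_matZ (hn : 0 < n) : (matZ M n y).det =
    (-2 : ℂ) ^ (n - 1) * ((matON M n y).det * (matSN M n y).det) := by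
  set t0 : Fin n := ⟨0, hn⟩ with ht0
  set e0 : ℤ := eA M n t0 with he0
  set colP : (Fin n ⊕ Fin n) → ℂ := Sum.elim (fun i => y i ^ e0 + y i ^ (-e0))
    (fun i => y i ^ e0 + y i ^ (-e0)) with hcolP
  set colM : (Fin n ⊕ Fin n) → ℂ := Sum.elim (fun i => y i ^ e0 - y i ^ (-e0))
    (fun i => -(y i ^ e0 - y i ^ (-e0)))  with hcolM
  have ht0v : (t0 : ℕ) = 0 := rfl
  have hsplit : matZ M n y = (matZ M n y).updateCol (Sum.inr t0)
      ((1 / 2 : ℂ) • colP + (-(1 / 2) : ℂ) • colM) := by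
    ext r c
    rw [Matrix.updateCol_apply]
    by_cases hc : c = Sum.inr t0
    · rw [if_pos hc]
      subst hc
      rcases r with i | i
      · show matZ M n y (Sum.inl i) (Sum.inr t0) = _
        have hZ : matZ M n y (Sum.inl i) (Sum.inr t0) = y i ^ (-e0) := by
          simp only [matZ, Matrix.fromBlocks_apply₁₂, matZQ1, Matrix.of_apply]
          simp [ht0v, he0]
        rw [hZ]
        simp only [Pi.add_apply, Pi.smul_apply, hcolP, hcolM, Sum.elim_inl, smul_eq_mul]
        ring
      · show matZ M n y (Sum.inr i) (Sum.inr t0) = _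
        have hZ : matZ M n y (Sum.inr i) (Sum.inr t0) = y i ^ e0 := by
          simp only [matZ, Matrix.fromBlocks_apply₂₂, matZQ2, Matrix.of_apply]
          simp [ht0v, he0]
        rw [hZ]
        simp only [Pi.add_apply, Pi.smul_apply, hcolP, hcolM, Sum.elim_inr, smul_eq_mul]
        ring
    · rw [if_neg hc]
  have hdet := congrArg Matrix.det hsplit
  rw [Matrix.det_updateCol_add, Matrix.det_updateCol_smul, Matrix.det_updateCol_smul]
    at hdet
  have hP : ((matZ M n y).updateCol (Sum.inr t0) colP).det = 0 := by
    set U := (matZ M n y).updateCol (Sum.inr t0) colP with hU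
    have hdetU : (Matrix.fromBlocks 1 0 (-1) 1 * U).det = U.det := by
      rw [Matrix.det_mul, Matrix.det_fromBlocks_zero₁₂]
      simp
    rw [← hdetU, rowdiff]
    apply det_eq_zero_pigeon t0
    · intro i j
      have h1 : U.toBlocks₂₁ i j = matON M n y i j := by
        simp [Matrix.toBlocks₂₁, hU, Matrix.updateCol_apply, matZ]
      have h2 : U.toBlocks₁₁ i j = matON M n y i j := by
        simp [Matrix.toBlocks₁₁, hU, Matrix.updateCol_apply, matZ]
      simp [Matrix.fromBlocks_apply₂₁, Matrix.sub_apply, h1, h2]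
    · intro i
      have h1 : U.toBlocks₂₂ i t0 = colP (Sum.inr i) := by
        simp [Matrix.toBlocks₂₂, hU, Matrix.updateCol_apply]
      have h2 : U.toBlocks₁₂ i t0 = colP (Sum.inl i) := by
        simp [Matrix.toBlocks₁₂, hU, Matrix.updateCol_apply]
      simp [Matrix.fromBlocks_apply₂₂, Matrix.sub_apply, h1, h2, hcolP]
  have hM : (matZ M n y).updateCol (Sum.inr t0) colM =
      Matrix.fromBlocks (matON M n y) (matSN M n y) (matON M n y) (-(matSN M n y)) := by
    ext r c
    rw [Matrix.updateCol_apply]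
    by_cases hc : c = Sum.inr t0
    · rw [if_pos hc]
      subst hc
      rcases r with i | i
      · show colM (Sum.inl i) = _
        simp only [hcolM, Sum.elim_inl, Matrix.fromBlocks_apply₁₂, matSN, Matrix.of_apply, he0]
      · show colM (Sum.inr i) = _
        simp only [hcolM, Sum.elim_inr, Matrix.fromBlocks_apply₂₂, Matrix.neg_apply, matSN,
          Matrix.of_apply, he0]
    · rw [if_neg hc]
      rcases r with i | i <;> rcases c with t | t
      · simp [matZ]
      · have htv : ¬((t : ℕ) = 0) := by
          intro hv
          exact hc (by rw [ht0]; exact congrArg Sum.inr (Fin.ext hv))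
        simp [matZ, matZQ1, matSN, if_neg htv]
      · simp [matZ]
      · have htv : ¬((t : ℕ) = 0) := by
          intro hv
          exact hc (by rw [ht0]; exact congrArg Sum.inr (Fin.ext hv))
        simp [matZ, matZQ2, matSN, if_neg htv]
  rw [hP, hM, det_blocks_pm, mul_zero, zero_add] at hdet
  rw [hdet]
  obtain ⟨m, rfl⟩ : ∃ m, n = m + 1 := ⟨n - 1, by omega⟩
  rw [pow_succ]
  simp only [Nat.add_sub_cancel]
  ring

lemma det_matY (hn : 0 < n) :
    (matY M n y).det = (matON M n y).det * (matSN M n y).det := by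
  have h1 := congrArg Matrix.det (matY_mul_R M n y)
  rw [Matrix.det_mul, detR n hn, det_matZ M n y hn] at h1
  have h2 : ((-2 : ℂ)) ^ (n - 1) ≠ 0 := pow_ne_zero _ (by norm_num)
  rw [mul_comm ((matY M n y).det) _] at h1
  exact mul_left_cancel₀ h2 h1
variable (x : Fin n → ℂ)

def matA1 : Matrix (Fin (2 * n)) (Fin (2 * n)) ℂ :=
  Matrix.of fun h t => pairVars x h ^
    ((if (t : ℕ) < n then (M : ℤ) else 0) + ((2 * n : ℕ) : ℤ) - 1 - ((t : ℕ) : ℤ))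
def matA2 : Matrix (Fin (2 * n)) (Fin (2 * n)) ℂ :=
  Matrix.of fun h t => pairVars x h ^
    ((if (t : ℕ) < n - 1 then (M : ℤ) else 0) + ((2 * n : ℕ) : ℤ) - 1 - ((t : ℕ) : ℤ))
def matDen : Matrix (Fin (2 * n)) (Fin (2 * n)) ℂ :=
  Matrix.of fun h t => pairVars x h ^ (((2 * n : ℕ) : ℤ) - 1 - ((t : ℕ) : ℤ))
def colSum : Fin (2 * n) → ℂ :=
  fun h => pairVars x h ^ ((M : ℤ) + (n : ℤ)) + pairVars x h ^ ((n : ℕ) : ℤ)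
def matE (hn : 0 < n) : Matrix (Fin (2 * n)) (Fin (2 * n)) ℂ :=
  (matA1 M n x).updateCol ⟨n - 1, by omega⟩ (colSum M n x)

def matDel : Matrix (Fin n ⊕ Fin n) (Fin n ⊕ Fin n) ℂ :=
  Matrix.diagonal (Sum.elim (fun i => y i ^ (-((M : ℤ) + 2 * (n : ℤ))))
    (fun i => y i ^ ((M : ℤ) + 2 * (n : ℤ))))
def matDelD : Matrix (Fin n ⊕ Fin n) (Fin n ⊕ Fin n) ℂ :=
  Matrix.diagonal (Sum.elim (fun i => y i ^ (-(2 * (n : ℤ) - 1)))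
    (fun i => y i ^ (2 * (n : ℤ) - 1)))

lemma pairVars_eval (p : Fin (2 * n)) (i : Fin n) (h : (p : ℕ) = 2 * (i : ℕ)) :
    pairVars x p = x i := by
  unfold pairVars
  rw [if_pos (by omega)]
  congr 1
  exact Fin.ext (by first | omega | (simp only [Fin.val_mk]; omega))

lemma pairVars_eval' (p : Fin (2 * n)) (i : Fin n) (h : (p : ℕ) = 2 * (i : ℕ) + 1) :
    pairVars x p = (x i)⁻¹ := by
  unfold pairVars
  rw [if_neg (by omega)]
  congr 2
  exact Fin.ext (by first | omega | (simp only [Fin.val_mk]; omega))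

lemma sum_dets (hn : 0 < n) :
    (matA1 M n x).det + (matA2 M n x).det = (matE M n x hn).det := by
  set pos : Fin (2 * n) := ⟨n - 1, by omega⟩ with hpos
  have hcol : colSum M n x = (fun h => pairVars x h ^ ((M : ℤ) + (n : ℤ))) +
      (fun h => pairVars x h ^ ((n : ℕ) : ℤ)) := rfl
  rw [matE, hcol, Matrix.det_updateCol_add]
  congr 1
  · congr 1
    ext h t
    rw [Matrix.updateCol_apply]
    by_cases ht : t = pos
    · subst ht
      rw [if_pos rfl]
      simp only [matA1, Matrix.of_apply, hpos, Fin.val_mk]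
      rw [if_pos (by omega)]
      congr 1
      omega
    · rw [if_neg ht]
  · congr 1
    ext h t
    rw [Matrix.updateCol_apply]
    by_cases ht : t = pos
    · subst ht
      simp only [if_pos rfl, matA2, Matrix.of_apply, hpos, Fin.val_mk]
      rw [if_neg (by omega)]
      congr 1
      omega
    · rw [if_neg ht]
      simp only [matA1, matA2, Matrix.of_apply]
      congr 2
      have htv : ¬((t : ℕ) = n - 1) := fun hv => ht (Fin.ext (by simp [hpos, hv]))
      split_ifs <;> omega

lemma del_mul_subE (hn : 0 < n) (hx : ∀ i, x i ≠ 0) (hy : ∀ i, y i ^ 2 = x i) :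
    matDel M n y * ((matE M n x hn).submatrix (rho n) (kap n)) = matY M n y := by
  have hy0 : ∀ i, y i ≠ 0 := fun i h => hx i (by rw [← hy i, h]; ring)
  have hxp : ∀ (i : Fin n) (e : ℤ), x i ^ e = y i ^ (2 * e) := fun i e => by
    rw [← hy i, ← zpow_natCast (y i) 2, ← _root_.zpow_mul]
    norm_num
  have hxpi : ∀ (i : Fin n) (e : ℤ), (x i)⁻¹ ^ e = y i ^ (-(2 * e)) := fun i e => by
    have h1 : (x i)⁻¹ ^ e = x i ^ (-e) := by rw [_root_.zpow_neg, _root_.inv_zpow]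
    rw [h1, hxp]
    congr 1
    ring
  have hpos : ∀ t : Fin n, (kap n (Sum.inl t) = (⟨n - 1, by omega⟩ : Fin (2 * n))) ↔
      ((t : ℕ) = n - 1) := by
    intro t
    constructor
    · intro h
      exact congrArg Fin.val h
    · intro h
      exact Fin.ext h
  have hposr : ∀ t : Fin n, ¬(kap n (Sum.inr t) = (⟨n - 1, by omega⟩ : Fin (2 * n))) := by
    intro t h
    have := congrArg Fin.val h
    simp only [kap_inr, Fin.val_mk] at this
    have := t.isLt
    omega
  ext r c
  rw [matDel, Matrix.diagonal_mul, Matrix.submatrix_apply, matE, Matrix.updateCol_apply]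
  rcases r with i | i <;> rcases c with t | t
  · -- row inl, col inl
    simp only [Sum.elim_inl]
    by_cases ht : (t : ℕ) = n - 1
    · rw [if_pos ((hpos t).2 ht)]
      simp only [colSum]
      rw [pairVars_eval n x _ i (rho_inl n i), hxp, hxp, mul_add, ← zpow_add₀ (hy0 i),
        ← zpow_add₀ (hy0 i)]
      simp only [matY, Matrix.fromBlocks_apply₁₁, matP1, Matrix.of_apply, if_pos ht, eC]
      congr 1 <;> congr 1 <;> omega
    · rw [if_neg (fun h => ht ((hpos t).1 h))]
      simp only [matA1, Matrix.of_apply]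
      rw [if_pos (show ((kap n (Sum.inl t) : ℕ)) < n from t.isLt)]
      simp only [kap_inl]
      rw [pairVars_eval n x _ i (rho_inl n i), hxp, ← zpow_add₀ (hy0 i)]
      simp only [matY, Matrix.fromBlocks_apply₁₁, matP1, Matrix.of_apply, if_neg ht, eC]
      congr 1
      omega
  · -- row inl, col inr
    simp only [Sum.elim_inl]
    rw [if_neg (hposr t)]
    simp only [matA1, Matrix.of_apply]
    rw [if_neg (show ¬ ((kap n (Sum.inr t) : ℕ) < n) by simp only [kap_inr]; have := t.isLt; omega)]
    simp only [kap_inr]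
    rw [pairVars_eval n x _ i (rho_inl n i), hxp,
      ← zpow_add₀ (hy0 i)]
    simp only [matY, Matrix.fromBlocks_apply₁₂, matQ1, Matrix.of_apply, eA]
    congr 1
    have := t.isLt
    omega
  · -- row inr, col inl
    simp only [Sum.elim_inr]
    by_cases ht : (t : ℕ) = n - 1
    · rw [if_pos ((hpos t).2 ht)]
      simp only [colSum]
      rw [pairVars_eval' n x _ i (rho_inr n i), hxpi, hxpi, mul_add, ← zpow_add₀ (hy0 i),
        ← zpow_add₀ (hy0 i)]
      simp only [matY, Matrix.fromBlocks_apply₂₁, matP2, Matrix.of_apply, if_pos ht, eC]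
      congr 1 <;> congr 1 <;> omega
    · rw [if_neg (fun h => ht ((hpos t).1 h))]
      simp only [matA1, Matrix.of_apply]
      rw [if_pos (show ((kap n (Sum.inl t) : ℕ)) < n from t.isLt)]
      simp only [kap_inl]
      rw [pairVars_eval' n x _ i (rho_inr n i), hxpi, ← zpow_add₀ (hy0 i)]
      simp only [matY, Matrix.fromBlocks_apply₂₁, matP2, Matrix.of_apply, if_neg ht, eC]
      congr 1
      omega
  · -- row inr, col inr
    simp only [Sum.elim_inr]
    rw [if_neg (hposr t)]
    simp only [matA1, Matrix.of_apply]
    rw [if_neg (show ¬ ((kap n (Sum.inr t) : ℕ) < n) by simp only [kap_inr]; have := t.isLt; omega)]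
    simp only [kap_inr]
    rw [pairVars_eval' n x _ i (rho_inr n i), hxpi,
      ← zpow_add₀ (hy0 i)]
    simp only [matY, Matrix.fromBlocks_apply₂₂, matQ2, Matrix.of_apply, eA]
    congr 1
    have := t.isLt
    omega

lemma del_mul_subD (hx : ∀ i, x i ≠ 0) (hy : ∀ i, y i ^ 2 = x i) :
    matDelD n y * ((matDen n x).submatrix (rho n) (kap n)) = matYD n y := by
  have hy0 : ∀ i, y i ≠ 0 := fun i h => hx i (by rw [← hy i, h]; ring)
  have hxp : ∀ (i : Fin n) (e : ℤ), x i ^ e = y i ^ (2 * e) := fun i e => by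
    rw [← hy i, ← zpow_natCast (y i) 2, ← _root_.zpow_mul]
    norm_num
  have hxpi : ∀ (i : Fin n) (e : ℤ), (x i)⁻¹ ^ e = y i ^ (-(2 * e)) := fun i e => by
    have h1 : (x i)⁻¹ ^ e = x i ^ (-e) := by rw [_root_.zpow_neg, _root_.inv_zpow]
    rw [h1, hxp]
    congr 1
    ring
  ext r c
  rw [matDelD, Matrix.diagonal_mul, Matrix.submatrix_apply]
  rcases r with i | i <;> rcases c with t | t <;>
    simp only [Sum.elim_inl, Sum.elim_inr, matDen, Matrix.of_apply, kap_inl, kap_inr]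
  · rw [pairVars_eval n x _ i (rho_inl n i), hxp, ← zpow_add₀ (hy0 i)]
    simp only [matYD, Matrix.fromBlocks_apply₁₁, Matrix.of_apply, eB]
    congr 1
    omega
  · rw [pairVars_eval n x _ i (rho_inl n i), hxp, ← zpow_add₀ (hy0 i)]
    simp only [matYD, Matrix.fromBlocks_apply₁₂, Matrix.of_apply, eB]
    congr 1
    have := t.isLt
    omega
  · rw [pairVars_eval' n x _ i (rho_inr n i), hxpi, ← zpow_add₀ (hy0 i)]
    simp only [matYD, Matrix.fromBlocks_apply₂₁, Matrix.of_apply, eB]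
    congr 1
    omega
  · rw [pairVars_eval' n x _ i (rho_inr n i), hxpi, ← zpow_add₀ (hy0 i)]
    simp only [matYD, Matrix.fromBlocks_apply₂₂, Matrix.of_apply, eB]
    congr 1
    have := t.isLt
    omega

lemma det_matDel (hy0 : ∀ i, y i ≠ 0) : (matDel M n y).det = 1 := by
  rw [matDel, Matrix.det_diagonal, Fintype.prod_sum_type]
  simp only [Sum.elim_inl, Sum.elim_inr]
  rw [← Finset.prod_mul_distrib]
  apply Finset.prod_eq_one
  intro i _
  rw [← zpow_add₀ (hy0 i),
    show -((M : ℤ) + 2 * (n : ℤ)) + ((M : ℤ) + 2 * (n : ℤ)) = 0 by ring, zpow_zero]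

lemma det_matDelD (hy0 : ∀ i, y i ≠ 0) : (matDelD n y).det = 1 := by
  rw [matDelD, Matrix.det_diagonal, Fintype.prod_sum_type]
  simp only [Sum.elim_inl, Sum.elim_inr]
  rw [← Finset.prod_mul_distrib]
  apply Finset.prod_eq_one
  intro i _
  rw [← zpow_add₀ (hy0 i), show -(2 * (n : ℤ) - 1) + (2 * (n : ℤ) - 1) = 0 by ring, zpow_zero]
lemma addpow (z : ℂ) (hz : z ≠ 0) (a : ℤ) :
    (z + z⁻¹) * (z ^ a + z ^ (-a)) =
      (z ^ (a + 1) + z ^ (-(a + 1))) + (z ^ (a - 1) + z ^ (-(a - 1))) := by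
  have h1 : z ^ (a + 1) = z ^ a * z := by rw [zpow_add₀ hz, zpow_one]
  have h2 : z ^ (-(a + 1)) = z ^ (-a) * z⁻¹ := by
    rw [show -(a + 1) = -a + -1 by ring, zpow_add₀ hz, _root_.zpow_neg_one]
  have h3 : z ^ (a - 1) = z ^ a * z⁻¹ := by
    rw [show a - 1 = a + -1 by ring, zpow_add₀ hz, _root_.zpow_neg_one]
  have h4 : z ^ (-(a - 1)) = z ^ (-a) * z := by
    rw [show -(a - 1) = -a + 1 by ring, zpow_add₀ hz, zpow_one]
  rw [h1, h2, h3, h4]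
  ring

def matR2 : Matrix (Fin n) (Fin n) ℂ :=
  Matrix.of fun u t => (if u = t then 1 else 0) +
    (if ((u : ℕ) = (t : ℕ) + 1 ∨ ((t : ℕ) = n - 1 ∧ (u : ℕ) = n - 1)) then 1 else 0)

lemma det_matR2 (hn : 0 < n) : (matR2 n).det = 2 := by
  have htri : (matR2 n).BlockTriangular OrderDual.toDual := by
    intro i j hij
    have hlt : (i : ℕ) < (j : ℕ) := OrderDual.toDual_lt_toDual.mp hij
    have h1 : ¬(i = j) := fun h => by rw [h] at hlt; omega
    have h2 : ¬((i : ℕ) = (j : ℕ) + 1 ∨ ((j : ℕ) = n - 1 ∧ (i : ℕ) = n - 1)) := by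
      rintro (h | ⟨ha, hb⟩) <;> omega
    simp only [matR2, Matrix.of_apply, if_neg h1, if_neg h2, add_zero]
  rw [Matrix.det_of_lowerTriangular _ htri]
  have hdiag : ∀ i : Fin n, matR2 n i i = if (i : ℕ) = n - 1 then 2 else 1 := by
    intro i
    simp only [matR2, Matrix.of_apply, if_pos rfl]
    by_cases h : (i : ℕ) = n - 1
    · rw [if_pos (Or.inr ⟨h, h⟩), if_pos h]
      norm_num
    · have hc : ¬((i : ℕ) = (i : ℕ) + 1 ∨ ((i : ℕ) = n - 1 ∧ (i : ℕ) = n - 1)) := by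
        rintro (h1 | ⟨h1, _⟩) <;> omega
      rw [if_neg hc, if_neg h]
      norm_num
  rw [Finset.prod_congr rfl (fun i _ => hdiag i)]
  rw [Finset.prod_eq_single (⟨n - 1, by omega⟩ : Fin n)]
  · rw [if_pos rfl]
  · intro b _ hb
    have hc : ¬((b : ℕ) = n - 1) := fun hv => hb (Fin.ext (by simp only [Fin.val_mk]; omega))
    rw [if_neg hc]
  · intro h
    exact absurd (Finset.mem_univ _) h

lemma bridge (hn : 0 < n) (hy0 : ∀ i, y i ≠ 0) :
    (∏ i, (y i + (y i)⁻¹)) * (matOD n y).det = 2 * (matPB n y).det := by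
  have key : Matrix.diagonal (fun i => y i + (y i)⁻¹) * matOD n y = matPB n y * matR2 n := by
    ext i t
    rw [Matrix.diagonal_mul, Matrix.mul_apply]
    have hsplit : ∀ u : Fin n, matPB n y i u * matR2 n u t =
        (if u = t then matPB n y i u else 0) +
        (if ((u : ℕ) = (t : ℕ) + 1 ∨ ((t : ℕ) = n - 1 ∧ (u : ℕ) = n - 1)) then matPB n y i u
          else 0) := by
      intro u
      simp only [matR2, Matrix.of_apply, mul_add, mul_ite, mul_one, mul_zero]
    rw [Finset.sum_congr rfl (fun u _ => hsplit u), Finset.sum_add_distrib]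
    have hS1 : (∑ u : Fin n, if u = t then matPB n y i u else 0) = matPB n y i t := by
      rw [Finset.sum_ite_eq' Finset.univ t (fun u => matPB n y i u)]
      simp
    rw [hS1]
    by_cases ht : (t : ℕ) + 1 < n
    · have htn : ¬((t : ℕ) = n - 1) := by omega
      have hS2 : (∑ u : Fin n, if ((u : ℕ) = (t : ℕ) + 1 ∨ ((t : ℕ) = n - 1 ∧ (u : ℕ) = n - 1))
          then matPB n y i u else 0) = matPB n y i ⟨(t : ℕ) + 1, ht⟩ := by
        rw [Finset.sum_eq_single (⟨(t : ℕ) + 1, ht⟩ : Fin n)]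
        · rw [if_pos (Or.inl (by simp only [Fin.val_mk]))]
        · intro b _ hb
          rw [if_neg]
          rintro (h1 | ⟨h1, _⟩)
          · exact hb (Fin.ext (by simp only [Fin.val_mk]; omega))
          · omega
        · intro h
          exact absurd (Finset.mem_univ _) h
      rw [hS2]
      simp only [matOD, matPB, Matrix.of_apply]
      have e1 : eB n t = eD n t + 1 := rfl
      have e2 : eB n ⟨(t : ℕ) + 1, ht⟩ = eD n t - 1 := by
        simp only [eB, eD, Fin.val_mk]
        omega
      rw [e1, e2, addpow (y i) (hy0 i) (eD n t)]
    · have htn : (t : ℕ) = n - 1 := by have := t.isLt; omega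
      have hS2 : (∑ u : Fin n, if ((u : ℕ) = (t : ℕ) + 1 ∨ ((t : ℕ) = n - 1 ∧ (u : ℕ) = n - 1))
          then matPB n y i u else 0) = matPB n y i t := by
        rw [Finset.sum_eq_single t]
        · rw [if_pos (Or.inr ⟨htn, htn⟩)]
        · intro b _ hb
          rw [if_neg]
          rintro (h1 | ⟨h1, h2⟩)
          · have := b.isLt; omega
          · exact hb (Fin.ext (by omega))
        · intro h
          exact absurd (Finset.mem_univ _) h
      rw [hS2]
      simp only [matOD, matPB, Matrix.of_apply]
      have e1 : eD n t = 0 := by simp only [eD]; omega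
      have e2 : eB n t = 1 := by simp only [eB]; omega
      rw [e1, e2]
      simp only [zpow_zero, zpow_one, _root_.zpow_neg_one, neg_zero, _root_.zpow_neg]
      ring
  have hd := congrArg Matrix.det key
  rw [Matrix.det_mul, Matrix.det_mul, Matrix.det_diagonal, det_matR2 n hn] at hd
  rw [hd]
  ring

lemma detDen_ne (hinj : Function.Injective (pairVars x)) : (matDen n x).det ≠ 0 := by
  have hinv : Function.Involutive
      (fun t : Fin (2 * n) => (⟨2 * n - 1 - (t : ℕ), by have := t.isLt; omega⟩ : Fin (2 * n))) :=
    fun t => Fin.ext (by simp only [Fin.val_mk]; have := t.isLt; omega)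
  set σ : Equiv.Perm (Fin (2 * n)) := Function.Involutive.toPerm _ hinv with hσ
  have hmat : matDen n x = (Matrix.vandermonde (pairVars x)).submatrix id σ := by
    ext h t
    simp only [Matrix.submatrix_apply, Matrix.vandermonde_apply, matDen, Matrix.of_apply, id_eq]
    rw [← zpow_natCast (pairVars x h) ((σ t : ℕ))]
    congr 1
    have hval : (σ t : ℕ) = 2 * n - 1 - (t : ℕ) := rfl
    rw [hval]
    have := t.isLt
    omega
  rw [hmat, Matrix.det_permute']
  apply mul_ne_zero
  · rcases Int.units_eq_one_or (Equiv.Perm.sign σ) with h | h <;> simp [h]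
  · exact Matrix.det_vandermonde_ne_zero_iff.mpr hinj

end
end SchurAux

/-- **Identity (6.5).**  For a non-negative integer `M`, an integer `n ≥ 1`,
and nonzero `x₁,…,xₙ` with square roots `y i` of `x i`, such that
`x₁, x₁⁻¹, …, xₙ, xₙ⁻¹` are pairwise distinct,
`(∏ᵢ (yᵢ + yᵢ⁻¹)) · (s_{(M^n)}(x₁,x₁⁻¹,…) + s_{(M^{n-1})}(x₁,x₁⁻¹,…))
  = so_{(((M+1)/2)^n)}(x₁,…,xₙ) · o^even_{((M/2)^n)}(x₁,…,xₙ)`,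
where the (possibly half-integer) shapes are encoded via their doubles. -/
theorem schur_sum_rectangle_uniform_factorization
    (M n : ℕ) (hn : 1 ≤ n) (x y : Fin n → ℂ) (hx : ∀ i, x i ≠ 0)
    (hy : ∀ i, y i ^ 2 = x i)
    (hdist : Function.Injective (pairVars x)) :
    (∏ i, (y i + (y i)⁻¹)) *
        (schurChar (fun t : Fin (2 * n) => if (t : ℕ) < n then (M : ℤ) else 0)
            (pairVars x) +
          schurChar (fun t : Fin (2 * n) => if (t : ℕ) < n - 1 then (M : ℤ) else 0)
            (pairVars x)) =
      soChar2 (fun _ => (M : ℤ) + 1) y * oevenChar2 (fun _ => (M : ℤ)) y := by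
  classical
  have hn0 : 0 < n := hn
  have hy0 : ∀ i, y i ≠ 0 := fun i h => hx i (by rw [← hy i, h]; ring)
  -- identify the characters with determinant ratios
  have hs1 : schurChar (fun t : Fin (2 * n) => if (t : ℕ) < n then (M : ℤ) else 0) (pairVars x)
      = (SchurAux.matA1 M n x).det / (SchurAux.matDen n x).det := rfl
  have hs2 : schurChar (fun t : Fin (2 * n) => if (t : ℕ) < n - 1 then (M : ℤ) else 0)
      (pairVars x) = (SchurAux.matA2 M n x).det / (SchurAux.matDen n x).det := rfl
  have hso : soChar2 (fun _ => (M : ℤ) + 1) y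
      = (SchurAux.matSN M n y).det / (SchurAux.matSD n y).det := rfl
  have hoe : oevenChar2 (fun _ => (M : ℤ)) y
      = 2 * (SchurAux.matON M n y).det / (SchurAux.matOD n y).det := rfl
  set sg : ℂ :=
    ((Equiv.Perm.sign (((SchurAux.kap n)).trans (SchurAux.rho n).symm) : ℤ) : ℂ) with hsgdef
  have hsg : sg * sg = 1 := by
    rcases Int.units_eq_one_or (Equiv.Perm.sign (((SchurAux.kap n)).trans
      (SchurAux.rho n).symm)) with h | h <;> rw [hsgdef, h] <;> norm_num
  have hsg0 : sg ≠ 0 := by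
    rcases Int.units_eq_one_or (Equiv.Perm.sign (((SchurAux.kap n)).trans
      (SchurAux.rho n).symm)) with h | h <;> rw [hsgdef, h] <;> norm_num
  -- numerator factorization
  have hE : sg * (SchurAux.matE M n x hn0).det
      = (SchurAux.matON M n y).det * (SchurAux.matSN M n y).det := by
    have h2 := congrArg Matrix.det (SchurAux.del_mul_subE M n y x hn0 hx hy)
    rw [Matrix.det_mul, SchurAux.det_matDel M n y hy0, one_mul,
      SchurAux.det_submatrix_two (SchurAux.rho n) (SchurAux.kap n),
      SchurAux.det_matY M n y hn0] at h2
    exact h2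
  -- denominator factorization
  have hD : sg * (SchurAux.matDen n x).det
      = (SchurAux.matPB n y).det * (SchurAux.matSD n y).det := by
    have h2 := congrArg Matrix.det (SchurAux.del_mul_subD n y x hx hy)
    rw [Matrix.det_mul, SchurAux.det_matDelD n y hy0, one_mul,
      SchurAux.det_submatrix_two (SchurAux.rho n) (SchurAux.kap n),
      SchurAux.det_matYD n y] at h2
    exact h2
  have hDne : (SchurAux.matDen n x).det ≠ 0 := SchurAux.detDen_ne n x hdist
  have hPBSD : (SchurAux.matPB n y).det * (SchurAux.matSD n y).det ≠ 0 := by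
    rw [← hD]
    exact mul_ne_zero hsg0 hDne
  have hPBne : (SchurAux.matPB n y).det ≠ 0 := fun h => hPBSD (by rw [h, zero_mul])
  have hSDne : (SchurAux.matSD n y).det ≠ 0 := fun h => hPBSD (by rw [h, mul_zero])
  have hbr := SchurAux.bridge n y hn0 hy0
  have hPine : (∏ i, (y i + (y i)⁻¹)) ≠ 0 := by
    apply Finset.prod_ne_zero_iff.mpr
    intro i _
    intro h
    have hx2 : x i = -1 := by
      rw [← hy i]
      field_simp [hy0 i] at h
      linear_combination h
    have e1 : pairVars x ((SchurAux.rho n) (Sum.inl i)) = x i :=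
      SchurAux.pairVars_eval n x _ i (SchurAux.rho_inl n i)
    have e2 : pairVars x ((SchurAux.rho n) (Sum.inr i)) = (x i)⁻¹ :=
      SchurAux.pairVars_eval' n x _ i (SchurAux.rho_inr n i)
    have heq : pairVars x ((SchurAux.rho n) (Sum.inl i))
        = pairVars x ((SchurAux.rho n) (Sum.inr i)) := by
      rw [e1, e2, hx2]
      norm_num
    have := congrArg Fin.val (hdist heq)
    simp only [SchurAux.rho_inl, SchurAux.rho_inr] at this
    omega
  have hODne : (SchurAux.matOD n y).det ≠ 0 := by
    intro h0
    rw [h0, mul_zero] at hbr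
    exact hPBne (by linear_combination -hbr / 2)
  -- assemble
  rw [hs1, hs2, hso, hoe, ← add_div, SchurAux.sum_dets M n x hn0]
  have hE' : (SchurAux.matE M n x hn0).det
      = sg * ((SchurAux.matON M n y).det * (SchurAux.matSN M n y).det) := by
    rw [← hE, ← mul_assoc, hsg, one_mul]
  have hD' : (SchurAux.matDen n x).det
      = sg * ((SchurAux.matPB n y).det * (SchurAux.matSD n y).det) := by
    rw [← hD, ← mul_assoc, hsg, one_mul]
  have hPB' : (SchurAux.matPB n y).det
      = (∏ i, (y i + (y i)⁻¹)) * (SchurAux.matOD n y).det / 2 := by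
    rw [eq_div_iff (two_ne_zero)]
    linear_combination -hbr
  rw [hE', hD', hPB', div_mul_div_comm, ← mul_div_assoc]
  rw [div_eq_div_iff
    (mul_ne_zero hsg0 (mul_ne_zero (div_ne_zero (mul_ne_zero hPine hODne) two_ne_zero) hSDne))
    (mul_ne_zero hSDne hODne)]
  ring
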